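/- Let G be a uniquely C4+-saturated graph on n vertices with at least one triangle, and let A be the set of all vertices belonging to some triangle of G. If there exists a vertex at distance 2 from A, then n = t(t+1)/2 + 1, where t is the common degree in G of the vertices not in A. -/

import Mathlib

open SimpleGraph

/-- The diamond graph `C₄⁺`: a `4`-cycle with one chord, i.e. `K₄` minus an edge. -/
def diamond : SimpleGraph (Fin 4) := (⊤ : SimpleGraph (Fin 4)).deleteEdges {s(0, 1)}

/-- `G'` is a copy of `H` in `G`, i.e. a subgraph of `G` isomorphic to `H`. -/
def IsCopy {W V : Type*} (H : SimpleGraph W) {G : SimpleGraph V} (G' : G.Subgraph) : Prop :=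
  Nonempty (G'.coe ≃g H)

/-- `G` is uniquely `H`-saturated: `G` is `H`-free, and adding any non-edge
creates exactly one copy of `H`. -/
def UniquelySaturated {W V : Type*} (H : SimpleGraph W) (G : SimpleGraph V) : Prop :=
  (∀ G' : G.Subgraph, ¬ IsCopy H G') ∧
    ∀ u v : V, u ≠ v → ¬ G.Adj u v →
      ∃! G' : (G ⊔ SimpleGraph.fromEdgeSet {s(u, v)}).Subgraph, IsCopy H G'

/-- The set of vertices belonging to some triangle of `G`. -/
def triangleVerts {V : Type*} (G : SimpleGraph V) : Set V :=
  {v | ∃ a b, G.Adj v a ∧ G.Adj v b ∧ G.Adj a b}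

lemma diamond_adj (i j : Fin 4) : diamond.Adj i j ↔ i ≠ j ∧ s(i, j) ≠ s((0 : Fin 4), 1) := by
  simp [diamond]

instance : DecidableRel diamond.Adj := fun i j =>
  decidable_of_iff _ (diamond_adj i j).symm

section patSub

variable {V : Type*}

/-- The subgraph of `H` on the vertices `f 0, f 1, f 2, f 3` with edges the images of the
diamond's edges (intersected with `H`'s edges). -/
def patSub (H : SimpleGraph V) (f : Fin 4 → V) : H.Subgraph where
  verts := Set.range f
  Adj a b := H.Adj a b ∧ ∃ i j, diamond.Adj i j ∧ f i = a ∧ f j = b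
  adj_sub h := h.1
  edge_vert h := by obtain ⟨_, i, j, _, rfl, _⟩ := h; exact ⟨i, rfl⟩
  symm := ⟨fun a b h => by
    obtain ⟨hH, i, j, hij, rfl, rfl⟩ := h
    exact ⟨hH.symm, j, i, hij.symm, rfl, rfl⟩⟩

lemma isCopy_patSub (H : SimpleGraph V) (f : Fin 4 → V) (hinj : Function.Injective f)
    (hf : ∀ i j, diamond.Adj i j → H.Adj (f i) (f j)) : IsCopy diamond (patSub H f) := by
  have phi : diamond ≃g (patSub H f).coe := by
    refine ⟨(Equiv.ofInjective f hinj).trans (Equiv.setCongr rfl), ?_⟩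
    intro a b
    show (patSub H f).Adj (f a) (f b) ↔ diamond.Adj a b
    constructor
    · rintro ⟨-, i, j, hij, hi, hj⟩
      rwa [hinj hi, hinj hj] at hij
    · intro h
      exact ⟨hf a b h, a, b, h, rfl, rfl⟩
  exact ⟨phi.symm⟩

lemma exists_patSub {H : SimpleGraph V} (D : H.Subgraph) (hD : IsCopy diamond D) :
    ∃ f : Fin 4 → V, Function.Injective f ∧
      (∀ i j, diamond.Adj i j → H.Adj (f i) (f j)) ∧ D = patSub H f := by
  obtain ⟨e⟩ := hD
  set f : Fin 4 → V := fun i => (e.symm i : V) with hf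
  have hinj : Function.Injective f :=
    Subtype.val_injective.comp e.symm.toEquiv.injective
  have hadj : ∀ i j, D.Adj (f i) (f j) ↔ diamond.Adj i j := by
    intro i j
    rw [← e.symm.map_rel_iff]
    rfl
  refine ⟨f, hinj, fun i j h => D.adj_sub ((hadj i j).2 h), ?_⟩
  have hverts : D.verts = Set.range f := by
    ext x
    constructor
    · intro hx
      refine ⟨e ⟨x, hx⟩, ?_⟩
      simp [hf]
    · rintro ⟨i, rfl⟩
      exact (e.symm i).2
  refine SimpleGraph.Subgraph.ext hverts ?_
  ext a b
  constructor
  · intro h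
    have ha : a ∈ Set.range f := hverts ▸ h.fst_mem
    have hb : b ∈ Set.range f := hverts ▸ h.snd_mem
    obtain ⟨i, rfl⟩ := ha
    obtain ⟨j, rfl⟩ := hb
    exact ⟨D.adj_sub h, i, j, (hadj i j).1 h, rfl, rfl⟩
  · rintro ⟨-, i, j, hij, rfl, rfl⟩
    exact (hadj i j).2 hij

lemma patSub_comp (H : SimpleGraph V) (f : Fin 4 → V) (σ : Equiv.Perm (Fin 4))
    (hσ : ∀ i j, diamond.Adj (σ i) (σ j) ↔ diamond.Adj i j) :
    patSub H (f ∘ σ) = patSub H f := by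
  refine SimpleGraph.Subgraph.ext ?_ ?_
  · show Set.range (f ∘ σ) = Set.range f
    rw [Set.range_comp, Equiv.range_eq_univ, Set.image_univ]
  · ext a b
    constructor
    · rintro ⟨hH, i, j, hij, rfl, rfl⟩
      exact ⟨hH, σ i, σ j, (hσ i j).2 hij, rfl, rfl⟩
    · rintro ⟨hH, i, j, hij, rfl, rfl⟩
      exact ⟨hH, σ.symm i, σ.symm j, by rw [← hσ]; simpa using hij, by simp, by simp⟩

end patSub

section key

variable {V : Type*} {G : SimpleGraph V}

lemma mem_triangleVerts {v a b : V} (h1 : G.Adj v a) (h2 : G.Adj v b) (h3 : G.Adj a b) :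
    v ∈ triangleVerts G := ⟨a, b, h1, h2, h3⟩

lemma addEdge_adj (a b x y : V) :
    (G ⊔ SimpleGraph.fromEdgeSet {s(a, b)}).Adj x y ↔ G.Adj x y ∨ (s(x, y) = s(a, b) ∧ x ≠ y) := by
  simp [sup_adj, fromEdgeSet_adj]

/-- Key structural lemma: any diamond copy created by adding the edge `ab` where `a` is in
no triangle and (`b` is in no triangle or `a` is not adjacent to any triangle vertex)
must consist of two common neighbours `p, q` of `a` and `b` together with `a, b`,
with `ab` as the chord. -/
lemma key (hfree : ∀ G' : G.Subgraph, ¬ IsCopy diamond G')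
    {a b : V} (hab : a ≠ b) (hnadj : ¬ G.Adj a b)
    (haA : a ∉ triangleVerts G)
    (hbA : b ∉ triangleVerts G ∨ ∀ w ∈ triangleVerts G, ¬ G.Adj a w)
    (D : (G ⊔ SimpleGraph.fromEdgeSet {s(a, b)}).Subgraph) (hD : IsCopy diamond D) :
    ∃ p q : V, p ≠ q ∧ G.Adj p a ∧ G.Adj p b ∧ G.Adj q a ∧ G.Adj q b ∧
      D = patSub (G ⊔ SimpleGraph.fromEdgeSet {s(a, b)}) ![p, q, a, b] := by
  classical
  obtain ⟨f, hinj, hf, rfl⟩ := exists_patSub D hD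
  by_cases hP : ∃ i j, diamond.Adj i j ∧ ((f i = a ∧ f j = b) ∨ (f i = b ∧ f j = a))
  · obtain ⟨i, j, hij, hor⟩ := hP
    have main : ∀ i j : Fin 4, diamond.Adj i j → f i = a → f j = b →
        ∃ p q : V, p ≠ q ∧ G.Adj p a ∧ G.Adj p b ∧ G.Adj q a ∧ G.Adj q b ∧
          patSub (G ⊔ SimpleGraph.fromEdgeSet {s(a, b)}) f
            = patSub (G ⊔ SimpleGraph.fromEdgeSet {s(a, b)}) ![p, q, a, b] := by
      clear hij hor
      intro i j hij hia hjb
      have hedge : ∀ k l : Fin 4, diamond.Adj k l → ¬(k = i ∧ l = j) → ¬(k = j ∧ l = i) →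
          G.Adj (f k) (f l) := by
        intro k l hkl h1 h2
        have h3 := hf k l hkl
        rw [addEdge_adj] at h3
        rcases h3 with h3 | ⟨h3, -⟩
        · exact h3
        · rw [← hia, ← hjb, Sym2.eq_iff] at h3
          rcases h3 with ⟨h4, h5⟩ | ⟨h4, h5⟩
          · exact absurd ⟨hinj h4, hinj h5⟩ h1
          · exact absurd ⟨hinj h4, hinj h5⟩ h2
      fin_cases i <;> fin_cases j <;>
        first
          | exact absurd hij (by decide)
          | skip
      -- (0,2)
      · exfalso
        have e12 := hedge 1 2 (by decide) (by decide) (by decide)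
        have e13 := hedge 1 3 (by decide) (by decide) (by decide)
        have e23 := hedge 2 3 (by decide) (by decide) (by decide)
        have e03 := hedge 0 3 (by decide) (by decide) (by decide)
        have hb2 : b ∈ triangleVerts G := by
          rw [← hjb]; exact mem_triangleVerts e12.symm e23 e13
        have hw : f 3 ∈ triangleVerts G := mem_triangleVerts e13.symm e23.symm e12
        have ha3 : G.Adj a (f 3) := by rw [← hia]; exact e03
        rcases hbA with h | h
        · exact h hb2
        · exact h _ hw ha3
      -- (0,3)
      · exfalso
        have e12 := hedge 1 2 (by decide) (by decide) (by decide)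
        have e13 := hedge 1 3 (by decide) (by decide) (by decide)
        have e23 := hedge 2 3 (by decide) (by decide) (by decide)
        have e02 := hedge 0 2 (by decide) (by decide) (by decide)
        have hb2 : b ∈ triangleVerts G := by
          rw [← hjb]; exact mem_triangleVerts e13.symm e23.symm e12
        have hw : f 2 ∈ triangleVerts G := mem_triangleVerts e12.symm e23 e13
        have ha3 : G.Adj a (f 2) := by rw [← hia]; exact e02
        rcases hbA with h | h
        · exact h hb2
        · exact h _ hw ha3
      -- (1,2)
      · exfalso
        have e02 := hedge 0 2 (by decide) (by decide) (by decide)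
        have e03 := hedge 0 3 (by decide) (by decide) (by decide)
        have e23 := hedge 2 3 (by decide) (by decide) (by decide)
        have e13 := hedge 1 3 (by decide) (by decide) (by decide)
        have hb2 : b ∈ triangleVerts G := by
          rw [← hjb]; exact mem_triangleVerts e02.symm e23 e03
        have hw : f 3 ∈ triangleVerts G := mem_triangleVerts e03.symm e23.symm e02
        have ha3 : G.Adj a (f 3) := by rw [← hia]; exact e13
        rcases hbA with h | h
        · exact h hb2
        · exact h _ hw ha3
      -- (1,3)
      · exfalso
        have e02 := hedge 0 2 (by decide) (by decide) (by decide)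
        have e03 := hedge 0 3 (by decide) (by decide) (by decide)
        have e23 := hedge 2 3 (by decide) (by decide) (by decide)
        have e12 := hedge 1 2 (by decide) (by decide) (by decide)
        have hb2 : b ∈ triangleVerts G := by
          rw [← hjb]; exact mem_triangleVerts e03.symm e23.symm e02
        have hw : f 2 ∈ triangleVerts G := mem_triangleVerts e02.symm e23 e03
        have ha3 : G.Adj a (f 2) := by rw [← hia]; exact e12
        rcases hbA with h | h
        · exact h hb2
        · exact h _ hw ha3
      -- (2,0)
      · exfalso
        have e12 := hedge 1 2 (by decide) (by decide) (by decide)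
        have e13 := hedge 1 3 (by decide) (by decide) (by decide)
        have e23 := hedge 2 3 (by decide) (by decide) (by decide)
        exact haA (by rw [← hia]; exact mem_triangleVerts e12.symm e23 e13)
      -- (2,1)
      · exfalso
        have e02 := hedge 0 2 (by decide) (by decide) (by decide)
        have e03 := hedge 0 3 (by decide) (by decide) (by decide)
        have e23 := hedge 2 3 (by decide) (by decide) (by decide)
        exact haA (by rw [← hia]; exact mem_triangleVerts e02.symm e23 e03)
      -- (2,3)
      · have e02 := hedge 0 2 (by decide) (by decide) (by decide)
        have e03 := hedge 0 3 (by decide) (by decide) (by decide)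
        have e12 := hedge 1 2 (by decide) (by decide) (by decide)
        have e13 := hedge 1 3 (by decide) (by decide) (by decide)
        refine ⟨f 0, f 1, hinj.ne (by decide), ?_, ?_, ?_, ?_, ?_⟩
        · rw [← hia]; exact e02
        · rw [← hjb]; exact e03
        · rw [← hia]; exact e12
        · rw [← hjb]; exact e13
        · refine congrArg _ ?_
          funext k
          fin_cases k <;> first | rfl | exact hia | exact hjb
      -- (3,0)
      · exfalso
        have e12 := hedge 1 2 (by decide) (by decide) (by decide)
        have e13 := hedge 1 3 (by decide) (by decide) (by decide)
        have e23 := hedge 2 3 (by decide) (by decide) (by decide)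
        exact haA (by rw [← hia]; exact mem_triangleVerts e13.symm e23.symm e12)
      -- (3,1)
      · exfalso
        have e02 := hedge 0 2 (by decide) (by decide) (by decide)
        have e03 := hedge 0 3 (by decide) (by decide) (by decide)
        have e23 := hedge 2 3 (by decide) (by decide) (by decide)
        exact haA (by rw [← hia]; exact mem_triangleVerts e03.symm e23.symm e02)
      -- (3,2)
      · have e02 := hedge 0 2 (by decide) (by decide) (by decide)
        have e03 := hedge 0 3 (by decide) (by decide) (by decide)
        have e12 := hedge 1 2 (by decide) (by decide) (by decide)
        have e13 := hedge 1 3 (by decide) (by decide) (by decide)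
        refine ⟨f 0, f 1, hinj.ne (by decide), ?_, ?_, ?_, ?_, ?_⟩
        · rw [← hia]; exact e03
        · rw [← hjb]; exact e02
        · rw [← hia]; exact e13
        · rw [← hjb]; exact e12
        · have h1 : ![f 0, f 1, a, b] = f ∘ (Equiv.swap 2 3) := by
            funext k
            fin_cases k <;> first | rfl | exact hia.symm | exact hjb.symm
          rw [h1, patSub_comp _ f _ (by decide)]
    rcases hor with ⟨h1, h2⟩ | ⟨h1, h2⟩
    · exact main i j hij h1 h2
    · exact main j i hij.symm h2 h1
  · exfalso
    refine hfree (patSub G f) (isCopy_patSub G f hinj ?_)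
    intro i j hij
    have h3 := hf i j hij
    rw [addEdge_adj] at h3
    rcases h3 with h3 | ⟨h3, -⟩
    · exact h3
    · rw [Sym2.eq_iff] at h3
      exact absurd ⟨i, j, hij, h3⟩ hP

end key

theorem stmt8 {V : Type*} [Fintype V] (G : SimpleGraph V)
    (hsat : UniquelySaturated diamond G)
    (htri : ∃ a b c : V, G.Adj a b ∧ G.Adj a c ∧ G.Adj b c)
    (hdist2 : ∃ u : V, u ∉ triangleVerts G ∧ (∀ a ∈ triangleVerts G, ¬ G.Adj u a) ∧
      ∃ a ∈ triangleVerts G, G.dist u a = 2)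
    (t : ℕ) (ht : ∀ u : V, u ∉ triangleVerts G → (G.neighborSet u).ncard = t) :
    Fintype.card V = t * (t + 1) / 2 + 1 := by
  classical
  obtain ⟨u, huA, hunadjA, -⟩ := hdist2
  set Nf : Finset V := G.neighborFinset u with hNf
  have hmemNf : ∀ x : V, x ∈ Nf ↔ G.Adj u x := fun x => G.mem_neighborFinset u x
  have hNcard : Nf.card = t := by
    have h1 := ht u huA
    rwa [Set.ncard_eq_toFinset_card'] at h1
  have hu_nf : u ∉ Nf := by simp [hmemNf]
  have hindep : ∀ x ∈ Nf, ∀ y ∈ Nf, ¬ G.Adj x y := by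
    intro x hx y hy hxy
    exact huA (mem_triangleVerts ((hmemNf x).1 hx) ((hmemNf y).1 hy) hxy)
  have hNfA : ∀ x ∈ Nf, x ∉ triangleVerts G := by
    intro x hx hxA
    exact hunadjA x hxA ((hmemNf x).1 hx)
  have mkCopy : ∀ x y p q : V, x ≠ y → G.Adj p x → G.Adj p y → G.Adj q x → G.Adj q y →
      p ≠ q → IsCopy diamond (patSub (G ⊔ SimpleGraph.fromEdgeSet {s(x, y)}) ![p, q, x, y]) := by
    intro x y p q hxy hpx hpy hqx hqy hpq
    apply isCopy_patSub
    · have n2 : p ≠ x := hpx.ne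
      have n3 : p ≠ y := hpy.ne
      have n4 : q ≠ x := hqx.ne
      have n5 : q ≠ y := hqy.ne
      intro k l h
      fin_cases k <;> fin_cases l <;>
        simp_all [Matrix.cons_val_zero, Matrix.cons_val_one, Matrix.head_cons] <;>
        first
          | rfl
          | exact absurd h hpq
          | exact absurd h hxy
          | exact absurd h.symm hpq
          | exact absurd h.symm hxy
    · intro i j hij
      rw [addEdge_adj]
      fin_cases i <;> fin_cases j <;>
        first
          | exact absurd hij (by decide)
          | exact Or.inl hpx
          | exact Or.inl hpx.symm
          | exact Or.inl hpy
          | exact Or.inl hpy.symm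
          | exact Or.inl hqx
          | exact Or.inl hqx.symm
          | exact Or.inl hqy
          | exact Or.inl hqy.symm
          | exact Or.inr ⟨rfl, hxy⟩
          | exact Or.inr ⟨Sym2.eq_swap, hxy.symm⟩
  -- Claim A: every vertex outside {u} ∪ N(u) has exactly two common neighbours with u
  have claimA : ∀ v : V, v ≠ u → v ∉ Nf →
      ∃ p q : V, p ≠ q ∧ Nf ∩ G.neighborFinset v = {p, q} := by
    intro v hvu hvNf
    have hne : u ≠ v := hvu.symm
    have hnadj : ¬ G.Adj u v := fun h => hvNf ((hmemNf v).2 h)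
    obtain ⟨D, hDcopy, huniq⟩ := hsat.2 u v hne hnadj
    obtain ⟨p, q, hpq, hpu, hpv, hqu, hqv, hDe⟩ :=
      key hsat.1 hne hnadj huA (Or.inr hunadjA) D hDcopy
    refine ⟨p, q, hpq, ?_⟩
    ext r
    simp only [Finset.mem_inter, hmemNf, mem_neighborFinset, Finset.mem_insert,
      Finset.mem_singleton]
    constructor
    · rintro ⟨hru, hrv⟩
      by_contra hcon
      push_neg at hcon
      have c2 : IsCopy diamond (patSub (G ⊔ SimpleGraph.fromEdgeSet {s(u, v)}) ![p, r, u, v]) :=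
        mkCopy u v p r hne hpu hpv hru.symm hrv.symm (fun h => hcon.1 h.symm)
      have e1 := huniq _ c2
      rw [hDe] at e1
      have hq : (q : V) ∈ (patSub (G ⊔ SimpleGraph.fromEdgeSet {s(u, v)}) ![p, q, u, v]).verts :=
        ⟨1, rfl⟩
      rw [← e1] at hq
      obtain ⟨k, hk⟩ := hq
      fin_cases k
      · exact hpq hk
      · exact hcon.2 hk
      · exact hqu.ne' hk
      · exact hqv.ne' hk
    · rintro (rfl | rfl)
      · exact ⟨hpu.symm, hpv.symm⟩
      · exact ⟨hqu.symm, hqv.symm⟩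
  set R : Finset V := Finset.univ \ insert u Nf with hR
  have hmemR : ∀ v : V, v ∈ R ↔ v ≠ u ∧ v ∉ Nf := by
    intro v
    simp [hR, Finset.mem_sdiff]
  have hbij : R.card = (Nf.powersetCard 2).card := by
    apply Finset.card_bij (fun v _ => Nf ∩ G.neighborFinset v)
    · -- maps into powersetCard 2
      intro v hv
      obtain ⟨hvu, hvNf⟩ := (hmemR v).1 hv
      obtain ⟨p, q, hpq, hset⟩ := claimA v hvu hvNf
      rw [Finset.mem_powersetCard]
      exact ⟨Finset.inter_subset_left, by rw [hset]; exact Finset.card_pair hpq⟩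
    · -- injective
      intro v hv v' hv' heq
      by_contra hvv'
      obtain ⟨hvu, hvNf⟩ := (hmemR v).1 hv
      obtain ⟨hv'u, hv'Nf⟩ := (hmemR v').1 hv'
      obtain ⟨p, q, hpq, hset⟩ := claimA v hvu hvNf
      have hp : p ∈ Nf ∩ G.neighborFinset v := by rw [hset]; simp
      have hq : q ∈ Nf ∩ G.neighborFinset v := by rw [hset]; simp
      have hp' : p ∈ Nf ∩ G.neighborFinset v' := by rw [← heq, hset]; simp
      have hq' : q ∈ Nf ∩ G.neighborFinset v' := by rw [← heq, hset]; simp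
      simp only [Finset.mem_inter, mem_neighborFinset] at hp hq hp' hq'
      have hpNf := hp.1
      have hqNf := hq.1
      have hnadjpq : ¬ G.Adj p q := hindep p hpNf q hqNf
      obtain ⟨D, hDcopy, huniq⟩ := hsat.2 p q hpq hnadjpq
      have c1 : IsCopy diamond (patSub (G ⊔ SimpleGraph.fromEdgeSet {s(p, q)}) ![u, v, p, q]) :=
        mkCopy p q u v hpq ((hmemNf p).1 hpNf) ((hmemNf q).1 hqNf) hp.2 hq.2 hvu.symm
      have c2 : IsCopy diamond (patSub (G ⊔ SimpleGraph.fromEdgeSet {s(p, q)}) ![u, v', p, q]) :=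
        mkCopy p q u v' hpq ((hmemNf p).1 hpNf) ((hmemNf q).1 hqNf) hp'.2 hq'.2 hv'u.symm
      have e1 := (huniq _ c1).trans (huniq _ c2).symm
      have hv'mem : (v' : V) ∈ (patSub (G ⊔ SimpleGraph.fromEdgeSet {s(p, q)}) ![u, v', p, q]).verts :=
        ⟨1, rfl⟩
      rw [← e1] at hv'mem
      obtain ⟨k, hk⟩ := hv'mem
      fin_cases k
      · exact hv'u hk.symm
      · exact hvv' hk
      · exact hv'Nf (hk ▸ hpNf)
      · exact hv'Nf (hk ▸ hqNf)
    · -- surjective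
      intro s hs
      rw [Finset.mem_powersetCard] at hs
      obtain ⟨hsub, hcard2⟩ := hs
      obtain ⟨x, y, hxy, rfl⟩ := Finset.card_eq_two.1 hcard2
      have hx : x ∈ Nf := hsub (by simp)
      have hy : y ∈ Nf := hsub (by simp)
      have hnadjxy : ¬ G.Adj x y := hindep x hx y hy
      obtain ⟨D, hDcopy, huniq⟩ := hsat.2 x y hxy hnadjxy
      obtain ⟨p, q, hpq, hpx, hpy, hqx, hqy, hDe⟩ :=
        key hsat.1 hxy hnadjxy (hNfA x hx) (Or.inl (hNfA y hy)) D hDcopy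
      have hpNf : p ∉ Nf := fun h => hindep p h x hx hpx
      have hqNf : q ∉ Nf := fun h => hindep q h x hx hqx
      have hkey : ∀ v : V, v ≠ u → v ∉ Nf → G.Adj v x → G.Adj v y →
          ∃ a, ∃ ha : a ∈ R, Nf ∩ G.neighborFinset a = {x, y} := by
        intro v hvu hvNf hvx hvy
        refine ⟨v, (hmemR v).2 ⟨hvu, hvNf⟩, ?_⟩
        obtain ⟨p', q', hp'q', hset⟩ := claimA v hvu hvNf
        have hsub2 : {x, y} ⊆ Nf ∩ G.neighborFinset v := by
          intro r hr
          simp only [Finset.mem_insert, Finset.mem_singleton] at hr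
          rcases hr with rfl | rfl
          · exact Finset.mem_inter.2 ⟨hx, (mem_neighborFinset G v r).2 hvx⟩
          · exact Finset.mem_inter.2 ⟨hy, (mem_neighborFinset G v r).2 hvy⟩
        refine (Finset.eq_of_subset_of_card_le hsub2 ?_).symm
        rw [hset, Finset.card_pair hp'q', Finset.card_pair hxy]
      rcases eq_or_ne p u with rfl | hpu
      · exact hkey q (fun h => hpq h.symm) hqNf hqx hqy
      · exact hkey p hpu hpNf hpx hpy
  have hsplit : R.card + (insert u Nf).card = Fintype.card V := by
    rw [hR]
    rw [Finset.card_sdiff_add_card_eq_card (Finset.subset_univ _), Finset.card_univ]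
  rw [Finset.card_insert_of_notMem hu_nf, hNcard] at hsplit
  rw [hbij, Finset.card_powersetCard, hNcard] at hsplit
  have h2 : t.choose 2 + t = (t + 1).choose 2 := by
    rw [Nat.choose_succ_succ t 1, Nat.choose_one_right, Nat.add_comm]
  have h3 : (t + 1).choose 2 = (t + 1) * t / 2 := by
    rw [Nat.choose_two_right]
    simp
  have h4 : (t + 1) * t = t * (t + 1) := Nat.mul_comm _ _
  rw [← hsplit]
  rw [show t.choose 2 + (t + 1) = (t.choose 2 + t) + 1 by omega, h2, h3, h4]
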